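/- Words a₁a₂...aₙ with 1 ≤ aᵢ ≤ 2i−1 for each i are in bijection with standard permutations of {±1,...,±n}, via the arc-diagram encoding; in particular the number of such words is (2n−1)!!. -/

import Mathlib

/-- A function `π : Fin (2n) → ℤ` listing each element of `{±1, …, ±n}`
exactly once. -/
def IsSgnPermF (n : ℕ) (π : Fin (2*n) → ℤ) : Prop :=
  Finset.univ.image π = (Finset.Icc (-(n:ℤ)) (n:ℤ)).erase 0

/-- A standard permutation of `{±1, …, ±n}`: each `i` appears before `-i`, and
the negative entries appear in the order `-1, -2, …, -n`. -/
def IsStdPermF (n : ℕ) (π : Fin (2*n) → ℤ) : Prop :=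
  IsSgnPermF n π ∧
  (∀ k l, 0 < π k → π l = -π k → k < l) ∧
  (∀ k l, π k < 0 → π l < 0 → (k < l ↔ π l < π k))

namespace Stmt7Aux

def R (x y : ℤ) : Prop := (y = -x → 0 < x) ∧ (x < 0 → y < 0 → y < x)

def StdL (n : ℕ) (L : List ℤ) : Prop :=
  L.length = 2*n ∧ (∀ m : ℤ, m ∈ L ↔ m ≠ 0 ∧ |m| ≤ (n:ℤ)) ∧ L.Nodup ∧ L.Pairwise R

def build (a : ℕ → ℕ) : ℕ → List ℤ
  | 0 => []
  | k+1 =>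
      (build a k).take (a k) ++ ((k:ℤ)+1) ::
        ((build a k).drop (a k) ++ [-((k:ℤ)+1)])

lemma build_perm (a : ℕ → ℕ) (k : ℕ) :
    (build a (k+1)).Perm (((k:ℤ)+1) :: (build a k ++ [-((k:ℤ)+1)])) := by
  have h1 : build a (k+1) = ((build a k).take (a k) ++ ((k:ℤ)+1) ::
      (build a k).drop (a k)) ++ [-((k:ℤ)+1)] := by
    simp [build]
  rw [h1]
  have h2 := (List.perm_middle (a := ((k:ℤ)+1)) (l₁ := (build a k).take (a k))
      (l₂ := (build a k).drop (a k))).append_right [-((k:ℤ)+1)]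
  rw [List.take_append_drop] at h2
  exact h2

lemma build_length (a : ℕ → ℕ) (k : ℕ) : (build a k).length = 2*k := by
  induction k with
  | zero => rfl
  | succ k ih =>
    have := (build_perm a k).length_eq
    simp [ih] at this
    omega

lemma build_mem (a : ℕ → ℕ) (k : ℕ) :
    ∀ m : ℤ, m ∈ build a k ↔ m ≠ 0 ∧ |m| ≤ (k:ℤ) := by
  induction k with
  | zero =>
    intro m
    rw [abs_le]
    simp only [build, List.not_mem_nil, false_iff]
    omega
  | succ k ih =>
    intro m
    rw [(build_perm a k).mem_iff]
    simp only [List.mem_cons, List.mem_append, List.mem_singleton, List.not_mem_nil, or_false, ih]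
    rw [abs_le, abs_le]
    push_cast
    omega

lemma build_nodup (a : ℕ → ℕ) (k : ℕ) : (build a k).Nodup := by
  induction k with
  | zero => exact List.nodup_nil
  | succ k ih =>
    refine (build_perm a k).nodup_iff.mpr ?_
    have hmem := fun m h => ((build_mem a k m).1 h).2
    simp only [List.nodup_cons, List.mem_append, List.mem_singleton, List.nodup_append,
      List.nodup_singleton, List.disjoint_singleton, List.mem_cons, List.not_mem_nil]
    refine ⟨?_, ih, ⟨not_false, List.nodup_nil⟩, ?_⟩
    · rintro (h | h | h)
      · have := abs_le.1 (hmem _ h); omega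
      · omega
      · exact h
    · intro x hx b hb
      rcases hb with rfl | hb
      · have := abs_le.1 (hmem _ hx); omega
      · exact hb.elim

lemma build_pairwise (a : ℕ → ℕ) (k : ℕ) : (build a k).Pairwise R := by
  induction k with
  | zero => exact List.Pairwise.nil
  | succ k ih =>
    have memL : ∀ x ∈ build a k, x ≠ 0 ∧ -(k:ℤ) ≤ x ∧ x ≤ (k:ℤ) := by
      intro x hx
      have h := (build_mem a k x).1 hx
      exact ⟨h.1, abs_le.1 h.2⟩
    have hAB : ((build a k).take (a k) ++ (build a k).drop (a k)).Pairwise R := by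
      rw [List.take_append_drop]; exact ih
    obtain ⟨hA, hB, hcross⟩ := List.pairwise_append.1 hAB
    show ((build a k).take (a k) ++ ((k:ℤ)+1) ::
        ((build a k).drop (a k) ++ [-((k:ℤ)+1)])).Pairwise R
    rw [List.pairwise_append]
    refine ⟨hA, ?_, ?_⟩
    · rw [List.pairwise_cons]
      constructor
      · intro y _
        exact ⟨fun _ => by omega, fun h _ => by omega⟩
      · rw [List.pairwise_append]
        refine ⟨hB, List.pairwise_singleton _ _, ?_⟩
        intro y hy z hz
        rw [List.mem_singleton] at hz; subst hz
        obtain ⟨hy0, hy1, hy2⟩ := memL y (List.drop_subset _ _ hy)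
        exact ⟨fun h => by omega, fun _ _ => by omega⟩
    · intro x hx y hy
      obtain ⟨hx0, hx1, hx2⟩ := memL x (List.take_subset _ _ hx)
      rcases List.mem_cons.1 hy with rfl | hy
      · exact ⟨fun h => by omega, fun _ h => by omega⟩
      rcases List.mem_append.1 hy with hy | hy
      · exact hcross x hx y hy
      · rw [List.mem_singleton] at hy; subst hy
        exact ⟨fun h => by omega, fun _ _ => by omega⟩

lemma build_congr {a b : ℕ → ℕ} : ∀ {k : ℕ}, (∀ i < k, a i = b i) → build a k = build b k
  | 0, _ => rfl
  | k+1, h => by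
    have ih := build_congr (a := a) (b := b) (k := k) (fun i hi => h i (by omega))
    simp only [build, ih, h k (by omega)]

lemma build_stdL (a : ℕ → ℕ) (n : ℕ) : StdL n (build a n) :=
  ⟨build_length a n, build_mem a n, build_nodup a n, build_pairwise a n⟩

lemma build_word (a : ℕ → ℕ) : ∀ {k : ℕ}, (∀ i < k, a i ≤ 2*i) → ∀ m < k,
    ∃ A B : List ℤ, build a k = A ++ ((m:ℤ)+1) :: B ∧ ((m:ℤ)+1) ∉ A ∧
      A.countP (fun x => decide (|x| ≤ (m:ℤ)+1)) = a m := by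
  intro k
  induction k with
  | zero => intro _ m hm; omega
  | succ k ih =>
    intro h m hm
    have hlen : (build a k).length = 2*k := build_length a k
    have hj : a k ≤ 2*k := h k (by omega)
    rcases Nat.lt_or_ge m k with hmk | hmk
    · -- m < k
      obtain ⟨A, B, hdec, hnotin, hcnt⟩ := ih (fun i hi => h i (by omega)) m hmk
      have hvu : ¬(|(k:ℤ)+1| ≤ (m:ℤ)+1) := by
        rw [abs_le]; omega
      by_cases hcase : a k ≤ A.length
      · refine ⟨A.take (a k) ++ ((k:ℤ)+1) :: A.drop (a k), B ++ [-((k:ℤ)+1)], ?_, ?_, ?_⟩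
        · show (build a k).take (a k) ++ ((k:ℤ)+1) ::
            ((build a k).drop (a k) ++ [-((k:ℤ)+1)]) = _
          rw [hdec, List.take_append_of_le_length hcase,
            List.drop_append_of_le_length hcase]
          simp [List.append_assoc]
        · intro hmem
          rcases List.mem_append.1 hmem with hmem | hmem
          · exact hnotin (List.take_subset _ _ hmem)
          rcases List.mem_cons.1 hmem with heq | hmem
          · have : ((m:ℤ)+1) = (k:ℤ)+1 := heq
            have : (m:ℤ) = (k:ℤ) := by omega
            have : m = k := by exact_mod_cast this
            omega
          · exact hnotin (List.drop_subset _ _ hmem)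
        · rw [List.countP_append, List.countP_cons]
          simp only [decide_eq_true_eq, hvu, if_false, add_zero]
          rw [← List.countP_append, List.take_append_drop]
          exact hcnt
      · have hj' : a k = (A ++ [((m:ℤ)+1)]).length + (a k - (A.length + 1)) := by
          simp only [List.length_append, List.length_singleton]; omega
        refine ⟨A, B.take (a k - (A.length + 1)) ++ ((k:ℤ)+1) ::
            (B.drop (a k - (A.length + 1)) ++ [-((k:ℤ)+1)]), ?_, hnotin, hcnt⟩
        show (build a k).take (a k) ++ ((k:ℤ)+1) ::
            ((build a k).drop (a k) ++ [-((k:ℤ)+1)]) = _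
        have hdec' : build a k = (A ++ [((m:ℤ)+1)]) ++ B := by
          rw [hdec]; simp
        rw [hdec', hj', List.take_length_add_append, List.drop_length_add_append]
        simp [List.append_assoc]
    · -- m = k
      have : m = k := by omega
      subst this
      refine ⟨(build a m).take (a m), (build a m).drop (a m) ++ [-((m:ℤ)+1)], rfl, ?_, ?_⟩
      · intro hmem
        have := abs_le.1 (((build_mem a m _).1 (List.take_subset _ _ hmem)).2)
        omega
      · have hall : ∀ x ∈ (build a m).take (a m),
            (fun x => decide (|x| ≤ (m:ℤ)+1)) x = true := by
          intro x hx
          have := abs_le.1 (((build_mem a m x).1 (List.take_subset _ _ hx)).2)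
          simp only [decide_eq_true_eq, abs_le]
          omega
        rw [List.countP_eq_length.2 hall, List.length_take, hlen, Nat.min_eq_left (by omega)]

lemma split_unique {u : ℤ} : ∀ (A : List ℤ) {A' B B' : List ℤ},
    A ++ u :: B = A' ++ u :: B' → u ∉ A → u ∉ A' → A = A' := by
  intro A
  induction A with
  | nil =>
    intro A' B B' h _ h2
    cases A' with
    | nil => rfl
    | cons x A'' =>
      simp only [List.nil_append, List.cons_append, List.cons.injEq] at h
      rw [h.1] at h2
      exact absurd List.mem_cons_self h2
  | cons y A ih =>
    intro A' B B' h h1 h2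
    cases A' with
    | nil =>
      simp only [List.cons_append, List.nil_append, List.cons.injEq] at h
      rw [← h.1] at h1
      exact absurd List.mem_cons_self h1
    | cons z A'' =>
      simp only [List.cons_append, List.cons.injEq] at h
      rw [h.1, ih h.2 (fun hm => h1 (List.mem_cons_of_mem _ hm))
        (fun hm => h2 (List.mem_cons_of_mem _ hm))]

lemma std_to_build : ∀ (n : ℕ) (L : List ℤ), StdL n L →
    ∃ a : ℕ → ℕ, (∀ i < n, a i ≤ 2*i) ∧ build a n = L := by
  intro n
  induction n with
  | zero =>
    intro L hL
    refine ⟨fun _ => 0, by omega, ?_⟩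
    have : L = [] := by
      rw [List.eq_nil_iff_forall_not_mem]
      intro x hx
      have h := (hL.2.1 x).1 hx
      have := abs_le.1 h.2
      simp at this
      omega
    rw [this]; rfl
  | succ n ih =>
    intro L hL
    obtain ⟨hlen, hmem, hnd, hpw⟩ := hL
    set v : ℤ := (n:ℤ)+1 with hv
    have hcast : ((n+1:ℕ):ℤ) = v := by push_cast; rfl
    have hvmem : -v ∈ L := by
      rw [hmem, hcast]
      constructor
      · omega
      · rw [abs_le]; omega
    obtain ⟨C, D, hCD⟩ := List.append_of_mem hvmem
    obtain ⟨hpwC, hpwD, hcrossCD⟩ := List.pairwise_append.1 (hCD ▸ hpw)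
    have hRD : ∀ d ∈ D, R (-v) d := (List.pairwise_cons.1 hpwD).1
    have claim1 : ∀ d ∈ D, 0 < d := by
      intro d hd
      have hdL : d ∈ L := by rw [hCD]; simp [hd]
      have hd' := (hmem d).1 hdL
      have habs := abs_le.1 hd'.2
      rw [hcast] at habs
      rcases lt_trichotomy d 0 with h0 | h0 | h0
      · have := (hRD d hd).2 (by omega) h0
        omega
      · exact absurd h0 hd'.1
      · exact h0
    have claim2 : D = [] := by
      rw [List.eq_nil_iff_forall_not_mem]
      intro d hd
      have hd0 := claim1 d hd
      have hdL : d ∈ L := by rw [hCD]; simp [hd]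
      have habs := abs_le.1 ((hmem d).1 hdL).2
      rw [hcast] at habs
      have hndL : -d ∈ L := by
        rw [hmem, hcast]
        refine ⟨by omega, ?_⟩
        rw [abs_le]; omega
      rw [hCD] at hndL
      rcases List.mem_append.1 hndL with hC | hD
      · have hr := hcrossCD _ hC d (List.mem_cons_of_mem _ hd)
        have := hr.1 (by omega)
        omega
      · rcases List.mem_cons.1 hD with heq | hD
        · -- -d = -v, so d = v
          have hdv : d = v := by omega
          have := (hRD d hd).1 (by omega)
          omega
        · have := claim1 _ hD
          omega
    subst claim2
    have hvC : v ∈ C := by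
      have : v ∈ L := by
        rw [hmem, hcast]
        exact ⟨by omega, by rw [abs_le]; omega⟩
      rw [hCD] at this
      rcases List.mem_append.1 this with h | h
      · exact h
      · simp at h; omega
    obtain ⟨A, B, hABdec⟩ := List.append_of_mem hvC
    have hLdec : L = A ++ v :: (B ++ [-v]) := by
      rw [hCD, hABdec]; simp
    -- nodup facts
    have hnd' := hLdec ▸ hnd
    have hvA : v ∉ A := by
      intro h
      rcases List.nodup_append.1 (by simpa using hnd') with ⟨_, _, hdisj⟩
      exact hdisj _ h _ List.mem_cons_self rfl
    have hsubM : (A ++ B).Sublist L := by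
      rw [hLdec]
      exact ((B.sublist_append_left [-v]).cons v).append_left A
    have hvM : v ∉ A ++ B := by
      intro h
      have : ¬ (A ++ B).Nodup ∨ True := Or.inr trivial
      -- v occurs in L once; use nodup of L with decomposition
      rcases List.mem_append.1 h with h' | h'
      · exact hvA h'
      · rcases List.nodup_append.1 (by simpa using hnd') with ⟨_, hnd2, _⟩
        rcases List.nodup_cons.1 hnd2 with ⟨hv2, _⟩
        exact hv2 (List.mem_append.2 (Or.inl h'))
    have hnvM : -v ∉ A ++ B := by
      intro h
      rcases List.mem_append.1 h with h' | h'
      · rcases List.nodup_append.1 (by simpa using hnd') with ⟨_, _, hdisj⟩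
        exact hdisj _ h' _ (List.mem_cons_of_mem _ (List.mem_append.2 (Or.inr (List.mem_singleton.2 rfl)))) rfl
      · rcases List.nodup_append.1 (by simpa using hnd') with ⟨_, hnd2, _⟩
        rcases List.nodup_cons.1 hnd2 with ⟨_, hnd3⟩
        rcases List.nodup_append.1 hnd3 with ⟨_, _, hdisj3⟩
        exact hdisj3 _ h' _ (List.mem_singleton.2 rfl) rfl
    have hMstd : StdL n (A ++ B) := by
      refine ⟨?_, ?_, hsubM.nodup hnd, List.Pairwise.sublist hsubM hpw⟩
      · have h2 : (A ++ v :: (B ++ [-v])).length = 2*(n+1) := by rw [← hLdec]; exact hlen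
        simp only [List.length_append, List.length_cons, List.length_singleton, List.length_nil] at h2 ⊢
        omega
      · intro m
        constructor
        · intro hm
          have hmL : m ∈ L := hsubM.subset hm
          have h1 := (hmem m).1 hmL
          have habs := abs_le.1 h1.2
          rw [hcast] at habs
          have hm1 : m ≠ v := fun h => hvM (h ▸ hm)
          have hm2 : m ≠ -v := fun h => hnvM (h ▸ hm)
          exact ⟨h1.1, by rw [abs_le]; omega⟩
        · intro ⟨hm0, hmabs⟩
          have habs := abs_le.1 hmabs
          have hmL : m ∈ L := by
            rw [hmem, hcast]
            exact ⟨hm0, by rw [abs_le]; omega⟩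
          rw [hLdec] at hmL
          rcases List.mem_append.1 hmL with h' | h'
          · exact List.mem_append.2 (Or.inl h')
          rcases List.mem_cons.1 h' with h' | h'
          · omega
          rcases List.mem_append.1 h' with h' | h'
          · exact List.mem_append.2 (Or.inr h')
          · simp at h'; omega
    obtain ⟨a', ha'bd, ha'⟩ := ih (A ++ B) hMstd
    have hMlen : (A ++ B).length = 2*n := hMstd.1
    refine ⟨fun i => if i = n then A.length else a' i, ?_, ?_⟩
    · intro i hi
      show (if i = n then A.length else a' i) ≤ 2*i
      by_cases h : i = n
      · rw [if_pos h]
        have h3 : A.length ≤ (A ++ B).length := by simp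
        omega
      · rw [if_neg h]
        exact ha'bd i (by omega)
    · have hbuildn : build (fun i => if i = n then A.length else a' i) n = A ++ B := by
        rw [build_congr (b := a') (fun i hi => if_neg (by omega))]
        exact ha'
      show (build _ n).take (if n = n then A.length else a' n) ++ ((n:ℤ)+1) ::
        ((build _ n).drop (if n = n then A.length else a' n) ++ [-((n:ℤ)+1)]) = L
      rw [hbuildn, if_pos rfl, List.take_left, List.drop_left, hLdec]

/-- The function associated to a list. -/
def toFun (n : ℕ) (L : List ℤ) : Fin (2*n) → ℤ := fun j => L.getD (j:ℕ) 0

lemma isStd_of_stdL {n : ℕ} {L : List ℤ} (h : StdL n L) :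
    IsStdPermF n (toFun n L) := by
  obtain ⟨hlen, hmem, hnd, hpw⟩ := h
  have hget : ∀ j : Fin (2*n), toFun n L j = L[(j:ℕ)]'(by rw [hlen]; exact j.2) :=
    fun j => List.getD_eq_getElem L 0 (by rw [hlen]; exact j.2)
  have hmemf : ∀ j : Fin (2*n), toFun n L j ∈ L := by
    intro j; rw [hget]; exact List.getElem_mem _
  have hpwf : ∀ i j : Fin (2*n), (i:ℕ) < (j:ℕ) → R (toFun n L i) (toFun n L j) := by
    intro i j hij
    rw [hget, hget]
    exact List.pairwise_iff_getElem.1 hpw _ _ (by rw [hlen]; exact i.2)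
      (by rw [hlen]; exact j.2) hij
  have hinj : ∀ i j : Fin (2*n), toFun n L i = toFun n L j → i = j := by
    intro i j hij
    rw [hget, hget] at hij
    exact Fin.ext (hnd.getElem_inj_iff.1 hij)
  have hne : ∀ j : Fin (2*n), toFun n L j ≠ 0 := fun j => ((hmem _).1 (hmemf j)).1
  refine ⟨?_, ?_, ?_⟩
  · ext x
    simp only [Finset.mem_image, Finset.mem_univ, true_and, Finset.mem_erase, Finset.mem_Icc]
    constructor
    · rintro ⟨j, rfl⟩
      have h1 := (hmem _).1 (hmemf j)
      exact ⟨h1.1, abs_le.1 h1.2⟩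
    · rintro ⟨hx0, hx1, hx2⟩
      have hxL : x ∈ L := (hmem x).2 ⟨hx0, abs_le.2 ⟨hx1, hx2⟩⟩
      obtain ⟨i, hi, hix⟩ := List.mem_iff_getElem.1 hxL
      refine ⟨⟨i, by omega⟩, ?_⟩
      rw [hget]
      exact hix
  · intro k l hk hkl
    rcases lt_trichotomy k l with h | h | h
    · exact h
    · exfalso; rw [h] at hk hkl; omega
    · exfalso
      have hr := hpwf l k h
      have := hr.1 (by omega)
      omega
  · intro k l hk hl
    constructor
    · intro hlt
      exact (hpwf k l hlt).2 hk hl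
    · intro hlt
      rcases lt_trichotomy k l with h | h | h
      · exact h
      · exfalso; rw [h] at hlt; omega
      · exfalso
        have := (hpwf l k h).2 hl hk
        omega

lemma stdL_of_isStd {n : ℕ} {π : Fin (2*n) → ℤ} (h : IsStdPermF n π) :
    StdL n (List.ofFn π) := by
  obtain ⟨himg, h3, h4⟩ := h
  have hmem' : ∀ m : ℤ, (∃ j, π j = m) ↔ m ≠ 0 ∧ |m| ≤ (n:ℤ) := by
    intro m
    have := Finset.ext_iff.1 himg m
    simp only [Finset.mem_image, Finset.mem_univ, true_and, Finset.mem_erase,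
      Finset.mem_Icc] at this
    rw [this, abs_le]
  have hne : ∀ j, π j ≠ 0 := by
    intro j
    exact ((hmem' (π j)).1 ⟨j, rfl⟩).1
  refine ⟨by simp, ?_, ?_, ?_⟩
  · intro m
    rw [List.mem_ofFn]
    exact hmem' m
  · rw [List.nodup_ofFn]
    have hcard : ((Finset.Icc (-(n:ℤ)) (n:ℤ)).erase 0).card = 2*n := by
      rw [Finset.card_erase_of_mem (by rw [Finset.mem_Icc]; omega), Int.card_Icc]
      omega
    have : (Finset.univ.image π).card = (Finset.univ : Finset (Fin (2*n))).card := by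
      rw [himg, hcard, Finset.card_univ, Fintype.card_fin]
    have hinj := Finset.card_image_iff.1 this
    rw [← Set.injOn_univ]
    simpa using hinj
  · rw [List.pairwise_iff_getElem]
    intro i j hi hj hij
    simp only [List.getElem_ofFn]
    have hi' : i < 2*n := by simpa using hi
    have hj' : j < 2*n := by simpa using hj
    constructor
    · intro heq
      by_contra h0
      push_neg at h0
      have hilt : π ⟨i, hi'⟩ < 0 := lt_of_le_of_ne h0 (hne _)
      have := h3 ⟨j, hj'⟩ ⟨i, hi'⟩ (by omega) (by omega)
      rw [Fin.lt_def] at this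
      simp at this
      omega
    · intro hni hnj
      exact (h4 ⟨i, hi'⟩ ⟨j, hj'⟩ hni hnj).1 (by rw [Fin.lt_def]; exact hij)

lemma countP_eq_sum (l : List ℤ) (q : ℤ → Bool) :
    l.countP q = ∑ i ∈ Finset.range l.length, if q (l.getD i 0) then 1 else 0 := by
  induction l with
  | nil => simp
  | cons x l ih =>
    rw [List.countP_cons, List.length_cons, Finset.sum_range_succ', ih]
    simp only [List.getD_cons_succ, List.getD_cons_zero]

lemma conv {N : ℕ} (f : Fin N → ℤ) (c : ℤ) (p : Fin N) :
    (Finset.univ.filter fun j : Fin N => j ≤ p ∧ |f j| ≤ c).card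
      = ((List.ofFn f).take ((p:ℕ)+1)).countP (fun x => decide (|x| ≤ c)) := by
  have hlen : (List.ofFn f).length = N := List.length_ofFn
  have hp1 : (p:ℕ) + 1 ≤ N := p.2
  have hgetD : ∀ i : ℕ, (h : i < N) → (List.ofFn f).getD i 0 = f ⟨i, h⟩ := by
    intro i h
    rw [List.getD_eq_getElem _ _ (by omega), List.getElem_ofFn]
  have htake : ((List.ofFn f).take ((p:ℕ)+1)).length = (p:ℕ)+1 := by
    rw [List.length_take, hlen]; omega
  rw [Finset.card_filter]
  have hstep : ∀ j : Fin N, (if j ≤ p ∧ |f j| ≤ c then 1 else 0) =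
      (fun i : ℕ => if i ≤ (p:ℕ) ∧ |(List.ofFn f).getD i 0| ≤ c then 1 else 0) (j:ℕ) := by
    intro j
    have h1 : (List.ofFn f).getD (j:ℕ) 0 = f j := by rw [hgetD _ j.2]
    simp only [h1, Fin.le_def]
  rw [countP_eq_sum, htake]
  refine Eq.trans (Finset.sum_congr rfl fun j _ => hstep j) ?_
  refine Eq.trans (Fin.sum_univ_eq_sum_range
    (fun i : ℕ => if i ≤ (p:ℕ) ∧ |(List.ofFn f).getD i 0| ≤ c then 1 else 0) N) ?_
  rw [← Finset.sum_subset (Finset.range_subset_range.2 hp1) ?vanish]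
  case vanish =>
    intro x hx hnx
    simp only [Finset.mem_range] at hx hnx
    rw [if_neg]
    rintro ⟨h1, _⟩
    omega
  apply Finset.sum_congr rfl
  intro i hi
  simp only [Finset.mem_range] at hi
  have hiN : i < N := by omega
  have h2 : ((List.ofFn f).take ((p:ℕ)+1)).getD i 0 = (List.ofFn f).getD i 0 := by
    rw [List.getD_eq_getElem _ _ (by rw [htake]; omega),
      List.getD_eq_getElem _ _ (by rw [hlen]; omega), List.getElem_take]
  rw [h2]
  simp only [decide_eq_true_eq]
  have h3 : i ≤ (p:ℕ) := by omega
  simp [h3]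

lemma prod_odd_eq_doubleFactorial (n : ℕ) :
    ∏ i ∈ Finset.range n, (2*i+1) = Nat.doubleFactorial (2*n-1) := by
  induction n with
  | zero => rfl
  | succ n ih =>
    rw [Finset.prod_range_succ, ih]
    rcases n with _ | m
    · rfl
    · have h1 : 2*(m+1+1)-1 = (2*m+1)+2 := by omega
      have h2 : 2*(m+1)-1 = 2*m+1 := by omega
      rw [h1, h2, Nat.doubleFactorial_add_two]
      ring

lemma card_words (n : ℕ) :
    Nat.card {w : Fin n → ℕ // ∀ i : Fin n, 1 ≤ w i ∧ w i ≤ 2*(i:ℕ)+1}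
      = Nat.doubleFactorial (2*n-1) := by
  rw [Nat.card_congr (Equiv.subtypePiEquivPi
    (p := fun (i : Fin n) (x : ℕ) => 1 ≤ x ∧ x ≤ 2*(i:ℕ)+1)), Nat.card_pi]
  have h1 : ∀ i : Fin n, Nat.card {x : ℕ // 1 ≤ x ∧ x ≤ 2*(i:ℕ)+1} = 2*(i:ℕ)+1 := by
    intro i
    rw [Nat.card_congr (Equiv.subtypeEquivRight
      (q := fun x => x ∈ Finset.Icc 1 (2*(i:ℕ)+1)) (fun x => by simp [Finset.mem_Icc]))]
    rw [Nat.card_eq_fintype_card, Fintype.card_coe, Nat.card_Icc]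
    omega
  rw [Finset.prod_congr rfl (fun i _ => h1 i)]
  rw [Fin.prod_univ_eq_prod_range (fun i => 2*i+1) n]
  exact prod_odd_eq_doubleFactorial n

/-- 0-indexed insertion positions from a word. -/
def aw {n : ℕ} (w : Fin n → ℕ) : ℕ → ℕ := fun i => if h : i < n then w ⟨i, h⟩ - 1 else 0

lemma aw_bd {n : ℕ} {w : Fin n → ℕ} (hw : ∀ i : Fin n, 1 ≤ w i ∧ w i ≤ 2*(i:ℕ)+1) :
    ∀ i < n, aw w i ≤ 2*i := by
  intro i hi
  have h := hw ⟨i, hi⟩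
  have h2 : ((⟨i, hi⟩ : Fin n) : ℕ) = i := rfl
  rw [h2] at h
  simp only [aw, dif_pos hi]
  omega

/-- The encoding map from words to standard permutations. -/
def enc (n : ℕ) (w : {w : Fin n → ℕ // ∀ i : Fin n, 1 ≤ w i ∧ w i ≤ 2*(i:ℕ)+1}) :
    {π : Fin (2*n) → ℤ // IsStdPermF n π} :=
  ⟨toFun n (build (aw w.val) n), isStd_of_stdL (build_stdL _ n)⟩

lemma enc_bijective (n : ℕ) : Function.Bijective (enc n) := by
  constructor
  · intro w w' h
    have hfun : toFun n (build (aw w.val) n) = toFun n (build (aw w'.val) n) :=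
      congrArg Subtype.val h
    have hLL : build (aw w.val) n = build (aw w'.val) n := by
      apply List.ext_getElem (by rw [build_length, build_length])
      intro i h1 h2
      have hi2 : i < 2*n := by rwa [build_length] at h1
      have h3 := congrFun hfun ⟨i, hi2⟩
      simp only [toFun] at h3
      rwa [List.getD_eq_getElem _ _ h1, List.getD_eq_getElem _ _ h2] at h3
    apply Subtype.ext
    funext i
    obtain ⟨A, B, hdec, hni, hcnt⟩ := build_word (aw w.val) (aw_bd w.2) i i.2
    obtain ⟨A', B', hdec', hni', hcnt'⟩ := build_word (aw w'.val) (aw_bd w'.2) i i.2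
    have hAA : A = A' := split_unique A (by rw [← hdec, hLL, hdec']) hni hni'
    have haa : aw w.val (i:ℕ) = aw w'.val (i:ℕ) := by rw [← hcnt, ← hcnt', hAA]
    have h1 := (w.2 i).1
    have h1' := (w'.2 i).1
    simp only [aw, dif_pos i.2, Fin.eta] at haa
    omega
  · intro π
    obtain ⟨a, hab, hb⟩ := std_to_build n _ (stdL_of_isStd π.2)
    refine ⟨⟨fun i => a (i:ℕ) + 1, fun i => ⟨by show 1 ≤ a (i:ℕ) + 1; omega,
      by show a (i:ℕ) + 1 ≤ 2*(i:ℕ)+1; have := hab (i:ℕ) i.2; omega⟩⟩, ?_⟩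
    apply Subtype.ext
    show toFun n (build (aw _) n) = π.val
    have hcongr : build (aw (fun i : Fin n => a (i:ℕ) + 1)) n = build a n :=
      build_congr (fun i hi => by simp only [aw, dif_pos hi]; simp)
    rw [hcongr, hb]
    funext j
    simp only [toFun]
    rw [List.getD_eq_getElem _ _ (by simp [j.2]), List.getElem_ofFn]

end Stmt7Aux

/-- Words `a₁…aₙ` with `1 ≤ aᵢ ≤ 2i-1` (here indexed by
`i : Fin n`, so the bound is `2·(i+1)-1 = 2i+1`) are in bijection with
standard permutations of `{±1,…,±n}` via the arc-diagram encoding: `a_k` is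
the number of positions `j ≤ p` with `|π j| ≤ k`, where `p` is the position of
the entry `k`.  In particular there are `(2n-1)!!` such words. -/
theorem stmt_7 (n : ℕ) :
    {w : Fin n → ℕ | ∀ i, 1 ≤ w i ∧ w i ≤ 2*(i:ℕ) + 1}.ncard =
        Nat.doubleFactorial (2*n - 1) ∧
      ∃ e : {w : Fin n → ℕ // ∀ i, 1 ≤ w i ∧ w i ≤ 2*(i:ℕ) + 1} ≃
          {π : Fin (2*n) → ℤ // IsStdPermF n π},
        ∀ (w : {w : Fin n → ℕ // ∀ i, 1 ≤ w i ∧ w i ≤ 2*(i:ℕ) + 1})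
          (k : Fin n) (p : Fin (2*n)), (e w).val p = ((k:ℕ) + 1 : ℤ) →
            w.val k =
              (Finset.univ.filter
                (fun j : Fin (2*n) => j ≤ p ∧ |(e w).val j| ≤ ((k:ℕ) + 1 : ℤ))).card := by
  constructor
  · rw [← Nat.card_coe_set_eq]
    exact (Nat.card_congr (Equiv.subtypeEquivRight fun w => Iff.rfl)).trans
      (Stmt7Aux.card_words n)
  · refine ⟨Equiv.ofBijective (Stmt7Aux.enc n) (Stmt7Aux.enc_bijective n), ?_⟩
    intro w k p hp
    have hval : (Equiv.ofBijective (Stmt7Aux.enc n) (Stmt7Aux.enc_bijective n) w).val =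
        Stmt7Aux.toFun n (Stmt7Aux.build (Stmt7Aux.aw w.val) n) := rfl
    rw [hval] at hp ⊢
    set L := Stmt7Aux.build (Stmt7Aux.aw w.val) n with hLdef
    obtain ⟨A, B, hdec, hnotin, hcnt⟩ :=
      Stmt7Aux.build_word (Stmt7Aux.aw w.val) (Stmt7Aux.aw_bd w.2) (k:ℕ) k.2
    have hnd := Stmt7Aux.build_nodup (Stmt7Aux.aw w.val) n
    have hlen := Stmt7Aux.build_length (Stmt7Aux.aw w.val) n
    rw [← hLdef] at hdec hnd hlen
    have hALlt : A.length < L.length := by rw [hdec]; simp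
    have hgetA : L[A.length]'hALlt = ((k:ℕ):ℤ)+1 := by
      have h0 : ∀ (hh : A.length < (A ++ (((k:ℕ):ℤ)+1) :: B).length),
          (A ++ (((k:ℕ):ℤ)+1) :: B)[A.length]'hh = ((k:ℕ):ℤ)+1 := by
        intro hh
        rw [List.getElem_append_right le_rfl]
        simp
      rw [show L[A.length]'hALlt = (A ++ (((k:ℕ):ℤ)+1) :: B)[A.length]'(by rw [← hdec]; exact hALlt) from by congr 1]
      exact h0 _
    have hpL : (p:ℕ) < L.length := by rw [hlen]; exact p.2
    have hgp : L[(p:ℕ)]'hpL = ((k:ℕ):ℤ)+1 := by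
      have h1 := hp
      simp only [Stmt7Aux.toFun] at h1
      rwa [List.getD_eq_getElem _ _ hpL] at h1
    have hploc : (p:ℕ) = A.length := hnd.getElem_inj_iff.1 (hgp.trans hgetA.symm)
    rw [Stmt7Aux.conv (Stmt7Aux.toFun n L) (((k:ℕ):ℤ)+1) p]
    have hofn : List.ofFn (Stmt7Aux.toFun n L) = L := by
      apply List.ext_getElem (by simp [hlen])
      intro i h1 h2
      rw [List.getElem_ofFn]
      simp only [Stmt7Aux.toFun]
      rw [List.getD_eq_getElem _ _ h2]
    rw [hofn]
    have htake : L.take ((p:ℕ)+1) = A ++ [((k:ℕ):ℤ)+1] := by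
      rw [hploc, hdec]
      rw [show A ++ (((k:ℕ):ℤ)+1) :: B = (A ++ [((k:ℕ):ℤ)+1]) ++ B from by simp]
      rw [List.take_left' (by simp)]
    rw [htake, List.countP_append, hcnt]
    have hone : List.countP (fun x => decide (|x| ≤ ((k:ℕ):ℤ)+1)) [((k:ℕ):ℤ)+1] = 1 := by
      rw [List.countP_cons, List.countP_nil]
      simp only [decide_eq_true_eq, abs_le]
      rw [if_pos (by constructor <;> omega)]
    rw [hone]
    have h1 := (w.2 k).1
    simp only [Stmt7Aux.aw, dif_pos k.2, Fin.eta]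
    omega
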